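/- arXiv:2504.21382 — 2 statements merged into one kernel-verified Lean document; each statement's English description precedes it below -/
import Mathlib

section
/- Let B and ID be finite sets of integers with an element x ∈ ID, and let I = [l,r] be an interval with bot(I) = [l, ⌊(l+r)/2⌋] and top(I) = [⌊(l+r)/2⌋+1, r]. If each element w of ID is assigned to bot(I) when |B| + rank(w, ID) ≤ |bot(I)| and to top(I) otherwise (where rank(w, ID) is the position of w in the sorted order of ID), then the number of elements of ID assigned to bot(I) is at most |bot(I)| − |B|, and the number assigned to top(I) is at most |ID| − (|bot(I)| − |B|). -/
theorem stmt_15 (B ID : Finset ℕ) (x : ℕ) (hx : x ∈ ID) (l r : ℕ) (hlr : l ≤ r) :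
    -- elements assigned to bot(I) = [l, (l+r)/2], whose size is (l+r)/2 - l + 1;
    -- rank w ID = (ID.filter (· ≤ w)).card
    (ID.filter fun w =>
        B.card + (ID.filter (· ≤ w)).card ≤ (l + r) / 2 - l + 1).card ≤
      ((l + r) / 2 - l + 1) - B.card ∧
    (ID.filter fun w =>
        ¬ B.card + (ID.filter (· ≤ w)).card ≤ (l + r) / 2 - l + 1).card ≤
      ID.card - (((l + r) / 2 - l + 1) - B.card) := by
  have hrk_mono : ∀ w ∈ ID, ∀ w' ∈ ID, w < w' →
      (ID.filter (· ≤ w)).card < (ID.filter (· ≤ w')).card := by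
    intro w hw w' hw' hlt
    apply Finset.card_lt_card
    refine ⟨fun a ha => ?_, ?_⟩
    · simp only [Finset.mem_filter] at ha ⊢
      exact ⟨ha.1, le_trans ha.2 hlt.le⟩
    intro hsub
    have h1 := hsub (Finset.mem_filter.mpr ⟨hw', le_refl _⟩)
    have h2 := (Finset.mem_filter.mp h1).2
    omega
  have hinj : ∀ w ∈ ID, ∀ w' ∈ ID,
      (ID.filter (· ≤ w)).card = (ID.filter (· ≤ w')).card → w = w' := by
    intro w hw w' hw' h
    rcases lt_trichotomy w w' with h1 | h1 | h1
    · exact absurd h (Nat.ne_of_lt (hrk_mono w hw w' hw' h1))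
    · exact h1
    · exact absurd h.symm (Nat.ne_of_lt (hrk_mono w' hw' w hw h1))
  have hge1 : ∀ w ∈ ID, 1 ≤ (ID.filter (· ≤ w)).card := by
    intro w hw
    exact Finset.card_pos.mpr ⟨w, Finset.mem_filter.mpr ⟨hw, le_refl _⟩⟩
  have hleN : ∀ w : ℕ, (ID.filter (· ≤ w)).card ≤ ID.card :=
    fun w => Finset.card_filter_le _ _
  constructor
  · have := Finset.card_le_card_of_injOn
      (f := fun w => (ID.filter (· ≤ w)).card)
      (s := ID.filter fun w =>
        B.card + (ID.filter (· ≤ w)).card ≤ (l + r) / 2 - l + 1)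
      (t := Finset.Icc 1 ((l + r) / 2 - l + 1 - B.card))
      (fun w hw => by
        simp only [Finset.mem_coe, Finset.mem_filter] at hw
        show (ID.filter (· ≤ w)).card ∈ _
        rw [Finset.mem_coe, Finset.mem_Icc]
        exact ⟨hge1 w hw.1, by omega⟩)
      (fun w hw w' hw' h => by
        simp only [Finset.coe_filter, Set.mem_setOf_eq] at hw hw'
        exact hinj w hw.1 w' hw'.1 h)
    rwa [Nat.card_Icc, Nat.add_sub_cancel] at this
  · have := Finset.card_le_card_of_injOn
      (f := fun w => (ID.filter (· ≤ w)).card - ((l + r) / 2 - l + 1 - B.card))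
      (s := ID.filter fun w =>
        ¬ B.card + (ID.filter (· ≤ w)).card ≤ (l + r) / 2 - l + 1)
      (t := Finset.Icc 1 (ID.card - ((l + r) / 2 - l + 1 - B.card)))
      (fun w hw => by
        simp only [Finset.mem_coe, Finset.mem_filter] at hw
        show (ID.filter (· ≤ w)).card - ((l + r) / 2 - l + 1 - B.card) ∈ _
        rw [Finset.mem_coe, Finset.mem_Icc]
        have h1 := hge1 w hw.1
        have h2 := hleN w
        have h3 := hw.2
        constructor <;> omega)
      (fun w hw w' hw' h => by
        simp only [Finset.coe_filter, Set.mem_setOf_eq] at hw hw'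
        have g1 := hge1 w hw.1
        have g2 := hge1 w' hw'.1
        have g3 := hw.2
        have g4 := hw'.2
        simp only at h
        exact hinj w hw.1 w' hw'.1 (by omega))
    rwa [Nat.card_Icc, Nat.add_sub_cancel] at this
end

section
/- In the Validator protocol: if every correct node has the same input in, then (assuming |G| ≥ c_g correct participants and |B| < c_g/2 Byzantine participants, with all correct participants in each other's views), every correct node v outputs same_v = 1 and out_v = in. Formally: each correct node sends INIT(in); thus every correct node receives ≥ c_g INIT messages of value in and < c_g/2 of any other value, echoes in, receives ≥ c_g ECHO messages of value in with frequency gap > c_g/2 over any other value, and therefore sets out_v = in and same_v = 1. -/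
/-- Number of INIT messages of value `x` received by `w` from the participants `G ∪ B`
(messages are authenticated, so each participant contributes at most one INIT message). -/
def initCount {V Val : Type*} [DecidableEq V] [DecidableEq Val]
    (G B : Finset V) (initRecv : V → V → Val) (w : V) (x : Val) : ℕ :=
  ((G ∪ B).filter fun s => initRecv s w = x).card

/-- Number of ECHO messages of value `x` received by `w` from the participants `G ∪ B`. -/
def echoCount {V Val : Type*} [DecidableEq V] [DecidableEq Val]
    (G B : Finset V) (echoRecv : V → V → Option Val) (w : V) (x : Val) : ℕ :=
  ((G ∪ B).filter fun s => echoRecv s w = some x).card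

theorem stmt_18 {V Val : Type*} [DecidableEq V] [DecidableEq Val]
    (G B : Finset V) (hdisj : Disjoint G B) (c_g : ℝ) (hcg : 0 < c_g)
    (hG : c_g ≤ (G.card : ℝ)) (hB : (B.card : ℝ) < c_g / 2)
    (inp : V → Val) (initRecv : V → V → Val)
    -- each correct node sends INIT with its input, consistently to everyone
    (hinitG : ∀ s ∈ G, ∀ w, initRecv s w = inp s)
    (echoRecv : V → V → Option Val)
    -- correct nodes echo consistently, echoing a value iff it is a most frequent
    -- INIT value received at least c_g times
    (hechoG : ∀ s ∈ G,
      (∀ w w', echoRecv s w = echoRecv s w') ∧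
      (∀ x w, echoRecv s w = some x →
        c_g ≤ (initCount G B initRecv s x : ℝ) ∧
        ∀ y, initCount G B initRecv s y ≤ initCount G B initRecv s x) ∧
      (∀ w, echoRecv s w = none →
        ∀ x, ¬ (c_g ≤ (initCount G B initRecv s x : ℝ) ∧
          ∀ y, initCount G B initRecv s y ≤ initCount G B initRecv s x)))
    (in1 in2 : V → Val) (out : V → Val) (same : V → Bool)
    -- in1 v is a most frequent ECHO value received by v, in2 v a second most frequent one
    (hin1 : ∀ v ∈ G, ∀ y, echoCount G B echoRecv v y ≤ echoCount G B echoRecv v (in1 v))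
    (hin2 : ∀ v ∈ G, in2 v ≠ in1 v ∧
      ∀ y, y ≠ in1 v → echoCount G B echoRecv v y ≤ echoCount G B echoRecv v (in2 v))
    -- output rule
    (hout : ∀ v ∈ G,
      (c_g / 2 < (echoCount G B echoRecv v (in1 v) : ℝ) → out v = in1 v) ∧
      (¬ c_g / 2 < (echoCount G B echoRecv v (in1 v) : ℝ) → out v = inp v))
    -- same-flag rule
    (hsame : ∀ v ∈ G, (same v = true ↔
      c_g ≤ (echoCount G B echoRecv v (in1 v) : ℝ) ∧
      (echoCount G B echoRecv v (in2 v) : ℝ) + c_g / 2 < echoCount G B echoRecv v (in1 v)))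
    -- every correct node has the same input
    (in0 : Val) (hcommon : ∀ v ∈ G, inp v = in0) :
    ∀ v ∈ G, same v = true ∧ out v = in0 := by
  -- INIT counts
  have hinit0 : ∀ w, c_g ≤ (initCount G B initRecv w in0 : ℝ) := by
    intro w
    have hsub : G ⊆ (G ∪ B).filter fun s => initRecv s w = in0 := by
      intro s hs
      simp only [Finset.mem_filter, Finset.mem_union]
      exact ⟨Or.inl hs, by rw [hinitG s hs w, hcommon s hs]⟩
    have := Finset.card_le_card hsub
    calc c_g ≤ (G.card : ℝ) := hG
      _ ≤ _ := by exact_mod_cast this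
  have hinitY : ∀ w, ∀ y, y ≠ in0 → (initCount G B initRecv w y : ℝ) ≤ B.card := by
    intro w y hy
    have hsub : ((G ∪ B).filter fun s => initRecv s w = y) ⊆ B := by
      intro s hs
      simp only [Finset.mem_filter, Finset.mem_union] at hs
      rcases hs with ⟨hsg | hsb, hval⟩
      · exact absurd (by rw [hinitG s hsg w, hcommon s hsg] at hval; exact hval.symm) hy
      · exact hsb
    exact_mod_cast Finset.card_le_card hsub
  have hinitmax : ∀ w, ∀ y, initCount G B initRecv w y ≤ initCount G B initRecv w in0 := by
    intro w y
    by_cases hy : y = in0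
    · subst hy; exact le_refl _
    · have : (initCount G B initRecv w y : ℝ) ≤ initCount G B initRecv w in0 := by
        calc (initCount G B initRecv w y : ℝ) ≤ B.card := hinitY w y hy
          _ ≤ c_g / 2 := le_of_lt hB
          _ ≤ c_g := by linarith
          _ ≤ _ := hinit0 w
      exact_mod_cast this
  -- every correct node echoes in0
  have hecho0 : ∀ s ∈ G, ∀ w, echoRecv s w = some in0 := by
    intro s hs w
    obtain ⟨_, hsome, hnone⟩ := hechoG s hs
    cases hx : echoRecv s w with
    | none => exact absurd ⟨hinit0 s, hinitmax s⟩ (hnone w hx in0)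
    | some x =>
      obtain ⟨hxc, _⟩ := hsome x w hx
      by_cases hxe : x = in0
      · rw [hxe]
      · exfalso
        have := hinitY s x hxe
        linarith
  -- ECHO counts
  have hechoC0 : ∀ v, c_g ≤ (echoCount G B echoRecv v in0 : ℝ) := by
    intro v
    have hsub : G ⊆ (G ∪ B).filter fun s => echoRecv s v = some in0 := by
      intro s hs
      simp only [Finset.mem_filter, Finset.mem_union]
      exact ⟨Or.inl hs, hecho0 s hs v⟩
    have := Finset.card_le_card hsub
    calc c_g ≤ (G.card : ℝ) := hG
      _ ≤ _ := by exact_mod_cast this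
  have hechoY : ∀ v, ∀ y, y ≠ in0 → (echoCount G B echoRecv v y : ℝ) ≤ B.card := by
    intro v y hy
    have hsub : ((G ∪ B).filter fun s => echoRecv s v = some y) ⊆ B := by
      intro s hs
      simp only [Finset.mem_filter, Finset.mem_union] at hs
      rcases hs with ⟨hsg | hsb, hval⟩
      · rw [hecho0 s hsg v] at hval
        exact absurd (Option.some_injective _ hval).symm hy
      · exact hsb
    exact_mod_cast Finset.card_le_card hsub
  intro v hv
  -- in1 v = in0
  have hin1v : in1 v = in0 := by
    by_contra hne
    have h1 := hin1 v hv in0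
    have : (echoCount G B echoRecv v in0 : ℝ) ≤ echoCount G B echoRecv v (in1 v) := by
      exact_mod_cast h1
    have := hechoY v (in1 v) hne
    have := hechoC0 v
    linarith
  have hn2 := (hin2 v hv).1
  have hin2small : (echoCount G B echoRecv v (in2 v) : ℝ) < c_g / 2 := by
    have := hechoY v (in2 v) (by rw [← hin1v]; exact hn2)
    linarith
  have h1big : c_g ≤ (echoCount G B echoRecv v (in1 v) : ℝ) := by
    rw [hin1v]; exact hechoC0 v
  constructor
  · exact (hsame v hv).2 ⟨h1big, by linarith⟩
  · have := (hout v hv).1 (by linarith)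
    rw [this, hin1v]
end
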